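/- The function f(x) = (ηx + 1)^(1/x) is nonincreasing on the interval (1,2] for any fixed η > -1/2; more precisely its derivative satisfies f'(x) ≤ 0 for all x ∈ (1,2]. -/
import Mathlib


theorem f_antitone_and_deriv_nonpos (η : ℝ) (hη : -(1/2) < η) :
    AntitoneOn (fun x : ℝ => (η * x + 1) ^ (1/x)) (Set.Ioc 1 2) ∧
    ∀ x ∈ Set.Ioc (1 : ℝ) 2, deriv (fun x : ℝ => (η * x + 1) ^ (1/x)) x ≤ 0 := by
  have hpos : ∀ x : ℝ, 1 < x → x ≤ 2 → 0 < η * x + 1 := by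
    intro x h1 h2
    rcases le_or_gt 0 η with h | h
    · nlinarith
    · nlinarith
  have hd : ∀ x : ℝ, 1 < x → x ≤ 2 →
      HasDerivAt (fun x : ℝ => (η * x + 1) ^ (1/x))
        (η * (1/x) * (η*x+1) ^ (1/x - 1) +
          (-(1/x^2)) * (η*x+1) ^ (1/x) * Real.log (η*x+1)) x := by
    intro x h1 h2
    have hx : x ≠ 0 := by linarith
    have hb : HasDerivAt (fun x : ℝ => η * x + 1) η x := by
      simpa using ((hasDerivAt_id x).const_mul η).add_const 1
    have he : HasDerivAt (fun x : ℝ => 1/x) (-(1/x^2)) x := by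
      simpa [one_div] using (hasDerivAt_inv hx)
    exact hb.rpow he (hpos x h1 h2)
  have hnonpos : ∀ x : ℝ, 1 < x → x ≤ 2 →
      η * (1/x) * (η*x+1) ^ (1/x - 1) +
        (-(1/x^2)) * (η*x+1) ^ (1/x) * Real.log (η*x+1) ≤ 0 := by
    intro x h1 h2
    have hu : 0 < η * x + 1 := hpos x h1 h2
    set u := η * x + 1 with hu_def
    have hxpos : (0:ℝ) < x := by linarith
    have hlog : 1 - 1/u ≤ Real.log u := by
      have h := Real.log_le_sub_one_of_pos (show (0:ℝ) < u⁻¹ by positivity)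
      rw [Real.log_inv] at h
      rw [one_div]
      linarith
    have hkey : η * x ≤ u * Real.log u := by
      have h1u : u * (1 - 1/u) = u - 1 := by field_simp
      have h2u : u * (1 - 1/u) ≤ u * Real.log u :=
        mul_le_mul_of_nonneg_left hlog hu.le
      have h3 : u - 1 ≤ u * Real.log u := by rw [← h1u]; exact h2u
      have h4 : u - 1 = η * x := by rw [hu_def]; ring
      linarith
    set A := u ^ (1/x) with hA_def
    have hA : 0 < A := Real.rpow_pos_of_pos hu _
    have hsub : u ^ (1/x - 1) = A / u := by
      rw [hA_def, Real.rpow_sub hu, Real.rpow_one]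
    rw [hsub]
    have heq : η * (1/x) * (A/u) + (-(1/x^2)) * A * Real.log u
        = -((A / (x^2 * u)) * (u * Real.log u - η * x)) := by
      field_simp
      ring
    rw [heq, neg_nonpos]
    apply mul_nonneg
    · positivity
    · linarith
  constructor
  · apply antitoneOn_of_deriv_nonpos (convex_Ioc 1 2)
    · intro x hx
      exact (hd x hx.1 hx.2).differentiableAt.continuousAt.continuousWithinAt
    · rw [interior_Ioc]
      intro x hx
      exact (hd x hx.1 hx.2.le).differentiableAt.differentiableWithinAt
    · rw [interior_Ioc]
      intro x hx
      rw [(hd x hx.1 hx.2.le).deriv]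
      exact hnonpos x hx.1 hx.2.le
  · intro x hx
    rw [(hd x hx.1 hx.2).deriv]
    exact hnonpos x hx.1 hx.2
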